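/- Let F : 𝕋³ → ℝ² (with coordinates (Ψ,φ) = (ψ₁,ψ₂,φ), each 2π-periodic) satisfy the symmetry property F(−JΨ, φ + π/2) = F(Ψ, φ) for all (Ψ,φ), where J = R_{−π/2}. If (Ψ(t), φ(t)) is a solution of the system Ψ' = R_φ(V + F(Ψ,φ)), φ' = ω, where V ∈ ℝ² is a constant vector and ω ∈ ℝ, then (J Ψ(t), φ(t) − π/2) is also a solution. -/

import Mathlib

open Real Matrix

/-- Rotation matrix by angle `θ`. -/
noncomputable def rot (θ : ℝ) : Matrix (Fin 2) (Fin 2) ℝ :=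
  !![Real.cos θ, -Real.sin θ; Real.sin θ, Real.cos θ]

/-- `J = [[0,1],[−1,0]] = R_{−π/2}`. -/
def Jmat : Matrix (Fin 2) (Fin 2) ℝ := !![0, 1; -1, 0]

lemma Fsym (F : (Fin 2 → ℝ) → ℝ → (Fin 2 → ℝ))
    (hsym : ∀ Ψ φ, F (-(Jmat *ᵥ Ψ)) (φ + π / 2) = F Ψ φ)
    (Ψ : Fin 2 → ℝ) (φ : ℝ) : F (Jmat *ᵥ Ψ) (φ - π / 2) = F Ψ φ := by
  have h := hsym (Jmat *ᵥ Ψ) (φ - π / 2)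
  have h2 : -(Jmat *ᵥ (Jmat *ᵥ Ψ)) = Ψ := by
    rw [Matrix.mulVec_mulVec]
    have : Jmat * Jmat = -1 := by
      ext i j
      fin_cases i <;> fin_cases j <;>
        simp [Jmat, Matrix.mul_apply, Fin.sum_univ_two]
    rw [this]
    simp [Matrix.neg_mulVec, Matrix.one_mulVec]
  rw [h2, sub_add_cancel] at h
  exact h.symm

lemma rot_shift (θ : ℝ) : rot (θ - π / 2) = Jmat * rot θ := by
  ext i j
  fin_cases i <;> fin_cases j <;>
    simp [rot, Jmat, Matrix.mul_apply, Fin.sum_univ_two, Real.cos_sub, Real.sin_sub]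

/-- If `F` has the lattice symmetry `F(−JΨ, φ+π/2) = F(Ψ,φ)` and `(Ψ(t),φ(t))`
solves `Ψ' = R_φ(V + F(Ψ,φ))`, `φ' = ω`, then `(JΨ(t), φ(t) − π/2)` is also a
solution. -/
theorem symmetry_maps_solutions_to_solutions
    (F : (Fin 2 → ℝ) → ℝ → (Fin 2 → ℝ)) (V : Fin 2 → ℝ) (ω : ℝ)
    (hperΨ : ∀ Ψ φ (i : Fin 2), F (Ψ + fun j => if j = i then 2 * π else 0) φ = F Ψ φ)
    (hperφ : ∀ Ψ φ, F Ψ (φ + 2 * π) = F Ψ φ)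
    (hsym : ∀ Ψ φ, F (-(Jmat *ᵥ Ψ)) (φ + π / 2) = F Ψ φ)
    (Ψ : ℝ → Fin 2 → ℝ) (φ : ℝ → ℝ)
    (hΨ : ∀ t, HasDerivAt Ψ (rot (φ t) *ᵥ (V + F (Ψ t) (φ t))) t)
    (hφ : ∀ t, HasDerivAt φ ω t) :
    (∀ t, HasDerivAt (fun s => Jmat *ᵥ Ψ s)
        (rot (φ t - π / 2) *ᵥ (V + F (Jmat *ᵥ Ψ t) (φ t - π / 2))) t) ∧
    (∀ t, HasDerivAt (fun s => φ s - π / 2) ω t) := by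
  refine ⟨fun t => ?_, fun t => ?_⟩
  · have hlin := (Matrix.mulVecLin Jmat).toContinuousLinearMap.hasFDerivAt
      (x := Ψ t) |>.comp_hasDerivAt t (hΨ t)
    simp only [LinearMap.coe_toContinuousLinearMap', Matrix.mulVecLin_apply,
      Function.comp_def] at hlin
    convert hlin using 1
    case e'_4 => rfl
    case e'_5 => rfl
    case e'_6 => rfl
    rw [Fsym F hsym, rot_shift, ← Matrix.mulVec_mulVec]
  · simpa using (hφ t).sub_const (π / 2)
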